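/- Let A = cos χ·1 + sin χ·k, B = 1, a = cos ψ·i + sin ψ·k, and b = a⁻¹ in SU(2), with χ ∈ (0, π) and ψ ∈ (−π/2, π/2). Then (A, B, a, b) satisfies [A,B]·a·b = 1, a and b are traceless, and the subgroup generated by {A, B, a, b} is nonabelian (i.e. the representation is irreducible). -/

import Mathlib

open Real Quaternion

/-- A point of the unperturbed Lagrangian W₀: with A = cos χ·1 + sin χ·k, B = 1,
a = cos ψ·i + sin ψ·k, b = a⁻¹ in the unit quaternions (χ ∈ (0,π),
ψ ∈ (−π/2, π/2)), the quadruple satisfies [A,B]·a·b = 1, a and b are traceless,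
and the representation is irreducible: the subgroup generated by {A,B,a,b} is
nonabelian, i.e. some pair of the generators fails to commute. -/
theorem W0_point_irreducible (χ ψ : ℝ) (hχ : χ ∈ Set.Ioo 0 Real.pi)
    (hψ : ψ ∈ Set.Ioo (-(Real.pi / 2)) (Real.pi / 2)) :
    let A : ℍ[ℝ] := ⟨Real.cos χ, 0, 0, Real.sin χ⟩
    let B : ℍ[ℝ] := 1
    let a : ℍ[ℝ] := ⟨0, Real.cos ψ, 0, Real.sin ψ⟩
    let b : ℍ[ℝ] := a⁻¹
    (A * B * A⁻¹ * B⁻¹) * a * b = 1 ∧ a.re = 0 ∧ b.re = 0 ∧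
      ∃ g ∈ ({A, B, a, b} : Set ℍ[ℝ]), ∃ h ∈ ({A, B, a, b} : Set ℍ[ℝ]),
        g * h ≠ h * g := by
  intro A B a b
  have hs : Real.sin χ > 0 := Real.sin_pos_of_pos_of_lt_pi hχ.1 hχ.2
  have hc : Real.cos ψ > 0 := Real.cos_pos_of_mem_Ioo ⟨hψ.1, hψ.2⟩
  have pyA : Real.cos χ ^ 2 + Real.sin χ ^ 2 = 1 := by
    rw [add_comm]; exact Real.sin_sq_add_cos_sq χ
  have pya : Real.cos ψ ^ 2 + Real.sin ψ ^ 2 = 1 := by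
    rw [add_comm]; exact Real.sin_sq_add_cos_sq ψ
  have hmul : ∀ x y : ℍ[ℝ], x * y = ⟨x.re * y.re - x.imI * y.imI - x.imJ * y.imJ - x.imK * y.imK,
      x.re * y.imI + x.imI * y.re + x.imJ * y.imK - x.imK * y.imJ,
      x.re * y.imJ - x.imI * y.imK + x.imJ * y.re + x.imK * y.imI,
      x.re * y.imK + x.imI * y.imJ - x.imJ * y.imI + x.imK * y.re⟩ := fun x y => by
    ext <;> simp [Quaternion.re_mul, Quaternion.imI_mul, Quaternion.imJ_mul, Quaternion.imK_mul]
  have hmul' : ∀ x y : ℍ[ℝ,-1,0,-1], @HMul.hMul ℍ[ℝ] ℍ[ℝ] ℍ[ℝ] _ x y = ⟨x.re * y.re - x.imI * y.imI - x.imJ * y.imJ - x.imK * y.imK,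
      x.re * y.imI + x.imI * y.re + x.imJ * y.imK - x.imK * y.imJ,
      x.re * y.imJ - x.imI * y.imK + x.imJ * y.re + x.imK * y.imI,
      x.re * y.imK + x.imI * y.imJ - x.imJ * y.imI + x.imK * y.re⟩ := fun x y => hmul x y
  have hone : ∀ x : ℍ[ℝ,-1,0,-1], @HMul.hMul ℍ[ℝ] ℍ[ℝ] ℍ[ℝ] _ x 1 = x := fun x => mul_one (M := ℍ[ℝ]) x
  have hAinv : A⁻¹ = (⟨Real.cos χ, 0, 0, -Real.sin χ⟩ : ℍ[ℝ]) := by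
    refine inv_eq_of_mul_eq_one_right ?_
    ext <;> simp [A, Quaternion.ext_iff, hmul, hmul'] <;> ring_nf <;> linarith [pyA]
  have hainv : a⁻¹ = (⟨0, -Real.cos ψ, 0, -Real.sin ψ⟩ : ℍ[ℝ]) := by
    refine inv_eq_of_mul_eq_one_right ?_
    ext <;> simp [a, Quaternion.ext_iff, hmul, hmul'] <;> ring_nf <;> linarith [pya]
  refine ⟨?_, rfl, ?_, A, by simp, a, by simp, ?_⟩
  · show (A * B * A⁻¹ * B⁻¹) * a * a⁻¹ = 1
    rw [hAinv, hainv]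
    ext <;> simp [A, B, a, Quaternion.ext_iff, hmul, hmul', hone] <;> ring_nf <;>
      nlinarith [pyA, pya]
  · show (a⁻¹).re = 0
    rw [hainv]
  · intro h
    have hj := congrArg QuaternionAlgebra.imJ h
    simp [A, a, Quaternion.imJ_mul, hmul, hmul'] at hj
    ring_nf at hj
    nlinarith [hs, hc]
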